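/- Hölder continuity of the ICS vector field on bounded sets: define auxiliary weights m̃_i = m_i + 2^{-i} (so m̃_i > 0 and ∑_i m̃_i = 2), and define F(x, v) = (v, A(x, v)) with A_i(x, v) = κ ∑_{j=1}^∞ m_j ψ(‖x_j − x_i‖) Γ(v_j − v_i). Then for every R₀ > 0 there exists a constant L_{R₀} > 0 such that for all u = (x, v) and ū = (x̄, v̄) with ‖u‖_B ≤ R₀ and ‖ū‖_B ≤ R₀, one has ‖F(u) − F(ū)‖_{H̃} ≤ L_{R₀} ‖u − ū‖_{H̃}^α; i.e., F is α-Hölder continuous from B to the weighted space on bounded sets. -/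

import Mathlib

open Filter MeasureTheory
open scoped Topology

noncomputable section

/-- Componentwise sign-power map `Γ`. -/
def Gam (d : ℕ) (α : ℝ) (v : EuclideanSpace ℝ (Fin d)) : EuclideanSpace ℝ (Fin d) :=
  WithLp.toLp 2 (fun k => Real.sign (v k) * |v k| ^ α)

/-- The interaction term `A_i(x,v) = κ ∑_j m_j ψ(‖x_j − x_i‖) Γ(v_j − v_i)`. -/
def AIC (d : ℕ) (κ α : ℝ) (m : ℕ → ℝ) (ψ : ℝ → ℝ)
    (x v : ℕ → EuclideanSpace ℝ (Fin d)) (i : ℕ) : EuclideanSpace ℝ (Fin d) :=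
  κ • ∑' j, (m j * ψ ‖x j - x i‖) • Gam d α (v j - v i)

/-- Weighted `ℓ²` seminorm of a sequence in `ℝ^d`. -/
def wnorm (d : ℕ) (mt : ℕ → ℝ) (u : ℕ → EuclideanSpace ℝ (Fin d)) : ℝ :=
  Real.sqrt (∑' i, mt i * ‖u i‖ ^ 2)

lemma real_rpow_add_le (a b : ℝ) (ha : 0 ≤ a) (hb : 0 ≤ b) {p : ℝ} (hp : 0 ≤ p) (hp1 : p ≤ 1) :
    (a + b) ^ p ≤ a ^ p + b ^ p := by
  have := NNReal.rpow_add_le_add_rpow (a.toNNReal) (b.toNNReal) hp hp1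
  have h1 : ((a.toNNReal + b.toNNReal : NNReal) : ℝ) = a + b := by
    simp [Real.coe_toNNReal, ha, hb]
  calc (a + b) ^ p = ((a.toNNReal + b.toNNReal : NNReal) : ℝ) ^ p := by rw [h1]
    _ = (((a.toNNReal + b.toNNReal) ^ p : NNReal) : ℝ) := by
        rw [← NNReal.coe_rpow]
    _ ≤ ((a.toNNReal ^ p + b.toNNReal ^ p : NNReal) : ℝ) := by exact_mod_cast this
    _ = a ^ p + b ^ p := by
        push_cast [NNReal.coe_rpow, Real.coe_toNNReal a ha, Real.coe_toNNReal b hb]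
        ring

/-- scalar Hölder bound for the sign-power function. -/


lemma sgn_rpow_holder {α : ℝ} (hα0 : 0 < α) (hα1 : α ≤ 1) (a b : ℝ) :
    |Real.sign a * |a| ^ α - Real.sign b * |b| ^ α| ≤ 2 * |a - b| ^ α := by
  -- helper: value on nonnegatives
  have key : ∀ a b : ℝ, b ≤ a → |Real.sign a * |a| ^ α - Real.sign b * |b| ^ α| ≤ 2 * |a - b| ^ α := by
    intro a b hab
    have hval : ∀ t : ℝ, 0 ≤ t → Real.sign t * |t| ^ α = t ^ α := by
      intro t ht
      rcases ht.eq_or_lt with h | h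
      · simp [← h, Real.sign_zero, Real.zero_rpow hα0.ne']
      · rw [Real.sign_of_pos h, abs_of_pos h, one_mul]
    have hvalneg : ∀ t : ℝ, t ≤ 0 → Real.sign t * |t| ^ α = -((-t) ^ α) := by
      intro t ht
      rcases ht.eq_or_lt with h | h
      · simp [h, Real.sign_zero, Real.zero_rpow hα0.ne']
      · rw [Real.sign_of_neg h, abs_of_neg h]; ring
    rcases le_or_gt 0 b with hb | hb
    · -- 0 ≤ b ≤ a
      have ha : 0 ≤ a := hb.trans hab
      rw [hval a ha, hval b hb]
      have h1 : a ^ α ≤ b ^ α + (a - b) ^ α := by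
        have := real_rpow_add_le b (a - b) hb (by linarith) hα0.le hα1
        simpa using this
      have h2 : b ^ α ≤ a ^ α := Real.rpow_le_rpow hb hab hα0.le
      rw [abs_of_nonneg (by linarith)]
      have : (0:ℝ) ≤ (a - b) ^ α := Real.rpow_nonneg (by linarith) _
      rw [abs_of_nonneg (by linarith)]
      linarith
    · rcases le_or_gt a 0 with ha | ha
      · -- b < a ≤ 0
        rw [hvalneg a ha, hvalneg b hb.le]
        have hb' : 0 ≤ -b := by linarith
        have h1 : (-b) ^ α ≤ (-a) ^ α + (a - b) ^ α := by
          have := real_rpow_add_le (-a) (a - b) (by linarith) (by linarith) hα0.le hα1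
          simpa [show (-a) + (a - b) = -b by ring] using this
        have h2 : (-a) ^ α ≤ (-b) ^ α := Real.rpow_le_rpow (by linarith) (by linarith) hα0.le
        have h3 : (0:ℝ) ≤ (a-b) ^ α := Real.rpow_nonneg (by linarith) _
        rw [abs_of_nonneg (by linarith)]
        rw [abs_of_nonneg (by linarith)]
        linarith
      · -- b < 0 < a
        rw [hval a ha.le, hvalneg b hb.le]
        have h3 : a ^ α ≤ (a - b) ^ α := Real.rpow_le_rpow ha.le (by linarith) hα0.le
        have h4 : (-b) ^ α ≤ (a - b) ^ α := Real.rpow_le_rpow (by linarith) (by linarith) hα0.le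
        have h5 : (0:ℝ) ≤ a ^ α := Real.rpow_nonneg ha.le _
        have h6 : (0:ℝ) ≤ (-b) ^ α := Real.rpow_nonneg (by linarith) _
        rw [abs_of_nonneg (by linarith), abs_of_nonneg (by linarith)]
        linarith
  rcases le_total b a with h | h
  · exact key a b h
  · rw [abs_sub_comm, abs_sub_comm a b]
    exact key b a h


lemma eucl_comp_le {d : ℕ} (u : EuclideanSpace ℝ (Fin d)) (k : Fin d) : |u k| ≤ ‖u‖ := by
  rw [EuclideanSpace.norm_eq, ← Real.sqrt_sq_eq_abs]
  apply Real.sqrt_le_sqrt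
  have : |u k| ^ 2 ≤ ∑ i, ‖u i‖ ^ 2 := by
    have := Finset.single_le_sum (f := fun i => ‖u i‖ ^ 2)
      (fun i _ => by positivity) (Finset.mem_univ k)
    simpa [Real.norm_eq_abs, sq_abs] using this
  simpa [sq_abs] using this


lemma eucl_norm_le_of_comp {d : ℕ} (u : EuclideanSpace ℝ (Fin d)) (C : ℝ) (hC : 0 ≤ C)
    (h : ∀ k, |u k| ≤ C) : ‖u‖ ≤ Real.sqrt d * C := by
  rw [EuclideanSpace.norm_eq]
  have : ∑ i, ‖u i‖ ^ 2 ≤ (d : ℝ) * C ^ 2 := by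
    calc ∑ i, ‖u i‖ ^ 2 ≤ ∑ _i : Fin d, C ^ 2 := by
          apply Finset.sum_le_sum
          intro i _
          have := h i
          rw [Real.norm_eq_abs]
          nlinarith [abs_nonneg (u i)]
      _ = (d : ℝ) * C ^ 2 := by simp [Finset.sum_const, mul_comm]
  calc Real.sqrt (∑ i, ‖u i‖ ^ 2) ≤ Real.sqrt ((d:ℝ) * C ^ 2) := Real.sqrt_le_sqrt this
    _ = Real.sqrt d * C := by
        rw [Real.sqrt_mul (by positivity), Real.sqrt_sq hC]


lemma gam_apply {d : ℕ} (α : ℝ) (v : EuclideanSpace ℝ (Fin d)) (k : Fin d) :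
    Gam d α v k = Real.sign (v k) * |v k| ^ α := rfl

lemma gam_norm_le {d : ℕ} {α : ℝ} (hα0 : 0 < α) (w : EuclideanSpace ℝ (Fin d)) :
    ‖Gam d α w‖ ≤ Real.sqrt d * ‖w‖ ^ α := by
  apply eucl_norm_le_of_comp _ _ (by positivity)
  intro k
  rw [gam_apply, abs_mul, Real.abs_rpow_of_nonneg (abs_nonneg _), abs_abs]
  calc |Real.sign (w k)| * |(w k)| ^ α ≤ 1 * |(w k)| ^ α := by
        apply mul_le_mul_of_nonneg_right _ (Real.rpow_nonneg (abs_nonneg _) _)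
        rcases Real.sign_apply_eq (w k) with h | h | h <;> simp [h]
    _ = |(w k)| ^ α := one_mul _
    _ ≤ ‖w‖ ^ α := Real.rpow_le_rpow (abs_nonneg _) (eucl_comp_le w k) hα0.le


lemma gam_holder {d : ℕ} {α : ℝ} (hα0 : 0 < α) (hα1 : α ≤ 1)
    (w w' : EuclideanSpace ℝ (Fin d)) :
    ‖Gam d α w - Gam d α w'‖ ≤ Real.sqrt d * (2 * ‖w - w'‖ ^ α) := by
  apply eucl_norm_le_of_comp _ _ (by positivity)
  intro k
  have heq : (Gam d α w - Gam d α w') k = Gam d α w k - Gam d α w' k := rfl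
  rw [heq, gam_apply, gam_apply]
  calc |Real.sign (w k) * |w k| ^ α - Real.sign (w' k) * |w' k| ^ α|
      ≤ 2 * |w k - w' k| ^ α := sgn_rpow_holder hα0 hα1 _ _
    _ ≤ 2 * ‖w - w'‖ ^ α := by
        have h1 : |w k - w' k| = |(w - w') k| := rfl
        rw [h1]
        have := Real.rpow_le_rpow (abs_nonneg _) (eucl_comp_le (w - w') k) hα0.le
        linarith


lemma tsum_cs (w b : ℕ → ℝ) (hw : ∀ i, 0 ≤ w i) (hb : ∀ i, 0 ≤ b i)
    (hWs : Summable w) (hW1 : ∑' i, w i ≤ 1)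
    (hS : Summable (fun i => w i * b i)) (hS2 : Summable (fun i => w i * b i ^ 2)) :
    ∑' i, w i * b i ≤ Real.sqrt (∑' i, w i * b i ^ 2) := by
  set T := ∑' i, w i * b i ^ 2 with hT
  have hT0 : 0 ≤ T := tsum_nonneg fun i => mul_nonneg (hw i) (sq_nonneg _)
  set S := Real.sqrt T with hSdef
  have hS0 : 0 ≤ S := Real.sqrt_nonneg _
  have hSsq : S ^ 2 = T := Real.sq_sqrt hT0
  rcases hS0.eq_or_lt with h0 | hpos
  · -- S = 0, so T = 0, so each term vanishes
    have hTz : T = 0 := by rw [← hSsq, ← h0]; ring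
    have hterm : ∀ i, w i * b i = 0 := by
      intro i
      have hle : w i * b i ^ 2 ≤ T := Summable.le_tsum hS2 i (fun j _ => mul_nonneg (hw j) (sq_nonneg _))
      have h1 : w i * b i ^ 2 = 0 := le_antisymm (hTz ▸ hle) (mul_nonneg (hw i) (sq_nonneg _))
      rcases mul_eq_zero.mp h1 with h | h
      · simp [h]
      · have : b i = 0 := by nlinarith [sq_nonneg (b i)]
        simp [this]
    have hz : ∑' i, w i * b i = 0 := by simp [hterm]
    rw [hz]
    exact hS0
  · -- pointwise bound w b ≤ (S/2) w + (1/(2S)) (w b²)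
    have hpt : ∀ i, w i * b i ≤ (S / 2) * w i + (1 / (2 * S)) * (w i * b i ^ 2) := by
      intro i
      have key : b i * (2 * S) ≤ S ^ 2 + b i ^ 2 := by nlinarith [sq_nonneg (S - b i)]
      have h2S : 0 < 2 * S := by linarith
      have heq : (S / 2) * w i + (1 / (2 * S)) * (w i * b i ^ 2)
          = (S ^ 2 * w i + w i * b i ^ 2) / (2 * S) := by
        field_simp
      rw [heq, le_div_iff₀ h2S]
      nlinarith [mul_le_mul_of_nonneg_left key (hw i)]
    have hsummRHS : Summable (fun i => (S / 2) * w i + (1 / (2 * S)) * (w i * b i ^ 2)) :=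
      ((hWs.mul_left _).add (hS2.mul_left _))
    calc ∑' i, w i * b i ≤ ∑' i, ((S / 2) * w i + (1 / (2 * S)) * (w i * b i ^ 2)) :=
          Summable.tsum_le_tsum hpt hS hsummRHS
      _ = (S / 2) * (∑' i, w i) + (1 / (2 * S)) * T := by
          rw [Summable.tsum_add (hWs.mul_left _) (hS2.mul_left _), tsum_mul_left, tsum_mul_left]
      _ ≤ (S / 2) * 1 + (1 / (2 * S)) * S ^ 2 := by
          have h1 : (S / 2) * (∑' i, w i) ≤ (S / 2) * 1 :=
            mul_le_mul_of_nonneg_left hW1 (by linarith)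
          rw [hSsq]
          linarith
      _ = S := by field_simp; ring


lemma rpow_le_one_add {α : ℝ} (hα0 : 0 < α) (hα1 : α ≤ 1) (t : ℝ) (ht : 0 ≤ t) :
    t ^ α ≤ 1 + t := by
  rcases le_total t 1 with h | h
  · have := Real.rpow_le_one ht h hα0.le
    linarith
  · have := Real.rpow_le_rpow_of_exponent_le h hα1
    rw [Real.rpow_one] at this
    linarith

lemma tsum_jensen (w a : ℕ → ℝ) {α W : ℝ} (hα0 : 0 < α) (hα1 : α ≤ 1)
    (hw : ∀ i, 0 ≤ w i) (ha : ∀ i, 0 ≤ a i)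
    (hWs : Summable w) (hW : ∑' i, w i ≤ W)
    (hS : Summable (fun i => w i * a i)) (hSα : Summable (fun i => w i * a i ^ α)) :
    ∑' i, w i * a i ^ α ≤ (W + 1) * (∑' i, w i * a i) ^ α := by
  set S := ∑' i, w i * a i with hSdef
  have hS0 : 0 ≤ S := tsum_nonneg fun i => mul_nonneg (hw i) (ha i)
  have hW0 : 0 ≤ W := le_trans (tsum_nonneg hw) hW
  rcases hS0.eq_or_lt with h0 | hpos
  · -- S = 0 : each w a = 0
    have hterm : ∀ i, w i * a i ^ α = 0 := by
      intro i
      have hle : w i * a i ≤ S := Summable.le_tsum hS i (fun j _ => mul_nonneg (hw j) (ha j))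
      have h1 : w i * a i = 0 := le_antisymm (h0 ▸ hle) (mul_nonneg (hw i) (ha i))
      rcases mul_eq_zero.mp h1 with h | h
      · simp [h]
      · rw [h, Real.zero_rpow hα0.ne', mul_zero]
    rw [← h0, Real.zero_rpow hα0.ne', mul_zero]
    calc ∑' i, w i * a i ^ α = 0 := by simp [hterm]
      _ ≤ 0 := le_refl _
  · have hpt : ∀ i, w i * a i ^ α ≤ S ^ α * w i + S ^ (α - 1) * (w i * a i) := by
      intro i
      have key : (a i / S) ^ α ≤ 1 + a i / S :=
        rpow_le_one_add hα0 hα1 _ (div_nonneg (ha i) hS0)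
      rw [Real.div_rpow (ha i) hS0] at key
      have hSα0 : 0 < S ^ α := Real.rpow_pos_of_pos hpos _
      have h2 : a i ^ α ≤ S ^ α + S ^ α * (a i / S) := by
        have := mul_le_mul_of_nonneg_left key hSα0.le
        calc a i ^ α = S ^ α * (a i ^ α / S ^ α) := by field_simp
          _ ≤ S ^ α * (1 + a i / S) := this
          _ = S ^ α + S ^ α * (a i / S) := by ring
      have h3 : S ^ α * (a i / S) = S ^ (α - 1) * a i := by
        rw [Real.rpow_sub hpos, Real.rpow_one]
        field_simp
      rw [h3] at h2
      calc w i * a i ^ α ≤ w i * (S ^ α + S ^ (α - 1) * a i) :=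
            mul_le_mul_of_nonneg_left h2 (hw i)
        _ = S ^ α * w i + S ^ (α - 1) * (w i * a i) := by ring
    have hsummRHS : Summable (fun i => S ^ α * w i + S ^ (α - 1) * (w i * a i)) :=
      ((hWs.mul_left _).add (hS.mul_left _))
    calc ∑' i, w i * a i ^ α ≤ ∑' i, (S ^ α * w i + S ^ (α - 1) * (w i * a i)) :=
          Summable.tsum_le_tsum hpt hSα hsummRHS
      _ = S ^ α * (∑' i, w i) + S ^ (α - 1) * S := by
          rw [Summable.tsum_add (hWs.mul_left _) (hS.mul_left _), tsum_mul_left, tsum_mul_left]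
      _ ≤ S ^ α * W + S ^ α := by
          have h1 : S ^ α * (∑' i, w i) ≤ S ^ α * W :=
            mul_le_mul_of_nonneg_left hW (by positivity)
          have h2 : S ^ (α - 1) * S = S ^ α := by
            rw [Real.rpow_sub hpos, Real.rpow_one]
            field_simp
          linarith
      _ = (W + 1) * S ^ α := by ring

/-- interpolation: for 0 ≤ t ≤ M, t ≤ M^(1-α) * t^α. -/


lemma le_rpow_interp {α M : ℝ} (hα0 : 0 < α) (hα1 : α ≤ 1) (t : ℝ) (ht : 0 ≤ t) (htM : t ≤ M) :
    t ≤ M ^ (1 - α) * t ^ α := by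
  rcases ht.eq_or_lt with h0 | hpos
  · rw [← h0, Real.zero_rpow hα0.ne', mul_zero]
  · have hM : 0 < M := lt_of_lt_of_le hpos htM
    have h1 : t = t ^ (1 - α) * t ^ α := by
      rw [← Real.rpow_add hpos]
      norm_num
    calc t = t ^ (1 - α) * t ^ α := h1
      _ ≤ M ^ (1 - α) * t ^ α :=
          mul_le_mul_of_nonneg_right (Real.rpow_le_rpow ht htM (by linarith)) (by positivity)


lemma sq_rpow_comm {α : ℝ} (t : ℝ) (ht : 0 ≤ t) : (t ^ 2) ^ α = (t ^ α) ^ 2 := by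
  rw [← Real.rpow_natCast t 2, ← Real.rpow_natCast (t ^ α) 2, ← Real.rpow_mul ht,
    ← Real.rpow_mul ht]
  ring_nf

lemma four_sq (a b c e : ℝ) : (a + b + c + e) ^ 2 ≤ 4 * (a ^ 2 + b ^ 2 + c ^ 2 + e ^ 2) := by
  nlinarith [sq_nonneg (a - b), sq_nonneg (c - e), sq_nonneg (a + b - c - e)]

lemma small2 (k A B : ℝ) (hA : 0 ≤ A) (hB : 0 ≤ B) :
    16 * k ^ 2 * A ^ 2 + 64 * k ^ 2 * B ^ 2 ≤ 64 * k ^ 2 * (A + B) ^ 2 := by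
  nlinarith [mul_nonneg (mul_nonneg (sq_nonneg k) hA) hB,
    mul_nonneg (sq_nonneg k) (sq_nonneg A)]

set_option maxHeartbeats 2000000 in
/-- Hölder continuity of the ICS vector field `F(x,v) = (v, A(x,v))` on
bounded subsets of `B`, from `B` into the weighted space with the auxiliary weights
`m̃_i = m_i + 2^{-i}`: `‖F(u) − F(ū)‖_{H̃} ≤ L_{R₀} ‖u − ū‖_{H̃}^α`. -/
theorem stmt16 (d : ℕ) (hd : 1 ≤ d) (κ : ℝ) (hκ : 0 < κ) (α : ℝ) (hα0 : 0 < α) (hα1 : α < 1)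
    (m : ℕ → ℝ) (hm0 : ∀ j, 0 ≤ m j) (hmS : Summable m) (hm1 : ∑' j, m j = 1)
    (ψ : ℝ → ℝ) (hψLip : ∃ L : NNReal, LipschitzOnWith L ψ (Set.Ici 0))
    (hψbdd : ∃ C : ℝ, ∀ r, 0 ≤ r → ψ r ≤ C)
    (hψanti : AntitoneOn ψ (Set.Ici 0)) (hψnn : ∀ r, 0 ≤ r → 0 ≤ ψ r)
    (mt : ℕ → ℝ) (hmt : ∀ i, mt i = m i + (2:ℝ)⁻¹ ^ i) :
    ∀ R₀ : ℝ, 0 < R₀ → ∃ L : ℝ, 0 < L ∧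
      ∀ x v xb vb : ℕ → EuclideanSpace ℝ (Fin d),
        BddAbove (Set.range fun i => ‖x i‖) → BddAbove (Set.range fun i => ‖v i‖) →
        BddAbove (Set.range fun i => ‖xb i‖) → BddAbove (Set.range fun i => ‖vb i‖) →
        (⨆ i, ‖x i‖) + (⨆ i, ‖v i‖) ≤ R₀ →
        (⨆ i, ‖xb i‖) + (⨆ i, ‖vb i‖) ≤ R₀ →
        wnorm d mt (fun i => v i - vb i) +
            wnorm d mt (fun i => AIC d κ α m ψ x v i - AIC d κ α m ψ xb vb i) ≤
          L * (wnorm d mt (fun i => x i - xb i) + wnorm d mt (fun i => v i - vb i)) ^ α := by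
  intro R₀ hR₀
  obtain ⟨Lψ, hLψ⟩ := hψLip
  obtain ⟨C0, hC0⟩ := hψbdd
  -- basic weight facts
  have hgeoS : Summable (fun i : ℕ => (2:ℝ)⁻¹ ^ i) :=
    summable_geometric_of_lt_one (by norm_num) (by norm_num)
  have hmtS : Summable mt := by
    have := hmS.add hgeoS
    exact this.congr (fun i => (hmt i).symm)
  have hmt0 : ∀ i, 0 ≤ mt i := by
    intro i; rw [hmt i]; have := hm0 i; positivity
  have hmle : ∀ i, m i ≤ mt i := by
    intro i; rw [hmt i]; exact le_add_of_nonneg_right (by positivity)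
  have hmtsum : ∑' i, mt i = 3 := by
    have h2 : ∑' i : ℕ, (2:ℝ)⁻¹ ^ i = 2 := by
      rw [tsum_geometric_of_lt_one (by norm_num) (by norm_num)]; norm_num
    calc ∑' i, mt i = ∑' i, (m i + (2:ℝ)⁻¹ ^ i) := tsum_congr hmt
      _ = (∑' i, m i) + ∑' i : ℕ, (2:ℝ)⁻¹ ^ i := Summable.tsum_add hmS hgeoS
      _ = 3 := by rw [hm1, h2]; norm_num
  -- constants
  set sd := Real.sqrt d with hsd
  have hsd0 : 0 ≤ sd := Real.sqrt_nonneg _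
  set Cψ := max C0 (0:ℝ) with hCψ
  have hCψ0 : 0 ≤ Cψ := le_max_right _ _
  have hψle : ∀ r, 0 ≤ r → ψ r ≤ Cψ := fun r hr => le_trans (hC0 r hr) (le_max_left _ _)
  set C1 := (Lψ : ℝ) * sd * (2 * R₀) ^ α with hC1
  have hC10 : 0 ≤ C1 := by positivity
  set C2 := 2 * Cψ * sd with hC2
  have hC20 : 0 ≤ C2 := by positivity
  set M := Real.sqrt (3 * (2 * R₀) ^ 2) with hM
  have hMpos : 0 < M := Real.sqrt_pos.mpr (by positivity)
  refine ⟨M ^ (1 - α) * (1 + 8 * κ * C1) + 8 * κ * C2 + 1, by positivity, ?_⟩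
  intro x v xb vb hBx hBv hBxb hBvb hsup hsupb
  -- norm bounds
  have hnormbd : ∀ (y w : ℕ → EuclideanSpace ℝ (Fin d)),
      BddAbove (Set.range fun i => ‖y i‖) → BddAbove (Set.range fun i => ‖w i‖) →
      (⨆ i, ‖y i‖) + (⨆ i, ‖w i‖) ≤ R₀ → (∀ i, ‖y i‖ ≤ R₀) ∧ (∀ i, ‖w i‖ ≤ R₀) := by
    intro y w hBy hBw hs
    have hy0 : 0 ≤ ⨆ i, ‖y i‖ := le_trans (norm_nonneg (y 0)) (le_ciSup hBy 0)
    have hw0 : 0 ≤ ⨆ i, ‖w i‖ := le_trans (norm_nonneg (w 0)) (le_ciSup hBw 0)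
    constructor
    · intro i; exact le_trans (le_ciSup hBy i) (by linarith)
    · intro i; exact le_trans (le_ciSup hBw i) (by linarith)
  obtain ⟨hxR, hvR⟩ := hnormbd x v hBx hBv hsup
  obtain ⟨hxbR, hvbR⟩ := hnormbd xb vb hBxb hBvb hsupb
  set δx := fun i => x i - xb i with hδx
  set δv := fun i => v i - vb i with hδv
  have hδxR : ∀ i, ‖δx i‖ ≤ 2 * R₀ := by
    intro i
    calc ‖x i - xb i‖ ≤ ‖x i‖ + ‖xb i‖ := norm_sub_le _ _
      _ ≤ 2 * R₀ := by linarith [hxR i, hxbR i]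
  have hδvR : ∀ i, ‖δv i‖ ≤ 2 * R₀ := by
    intro i
    calc ‖v i - vb i‖ ≤ ‖v i‖ + ‖vb i‖ := norm_sub_le _ _
      _ ≤ 2 * R₀ := by linarith [hvR i, hvbR i]
  set Dx := wnorm d mt δx with hDx
  set Dv := wnorm d mt δv with hDv
  have hDx0 : 0 ≤ Dx := Real.sqrt_nonneg _
  have hDv0 : 0 ≤ Dv := Real.sqrt_nonneg _
  -- summability of weighted squares and basics
  have hsq_summ : ∀ (u : ℕ → EuclideanSpace ℝ (Fin d)), (∀ i, ‖u i‖ ≤ 2 * R₀) →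
      Summable (fun i => mt i * ‖u i‖ ^ 2) := by
    intro u hu
    apply Summable.of_nonneg_of_le (fun i => mul_nonneg (hmt0 i) (sq_nonneg _))
      (fun i => ?_) (hmtS.mul_right ((2 * R₀) ^ 2))
    exact mul_le_mul_of_nonneg_left (by nlinarith [norm_nonneg (u i), hu i]) (hmt0 i)
  have hδxsq : Summable (fun i => mt i * ‖δx i‖ ^ 2) := hsq_summ δx hδxR
  have hδvsq : Summable (fun i => mt i * ‖δv i‖ ^ 2) := hsq_summ δv hδvR
  have hDxsq : Dx ^ 2 = ∑' i, mt i * ‖δx i‖ ^ 2 :=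
    Real.sq_sqrt (tsum_nonneg (fun i => mul_nonneg (hmt0 i) (sq_nonneg _)))
  have hDvsq : Dv ^ 2 = ∑' i, mt i * ‖δv i‖ ^ 2 :=
    Real.sq_sqrt (tsum_nonneg (fun i => mul_nonneg (hmt0 i) (sq_nonneg _)))
  -- Dx, Dv ≤ M
  have hwle : ∀ (u : ℕ → EuclideanSpace ℝ (Fin d)), (∀ i, ‖u i‖ ≤ 2 * R₀) →
      wnorm d mt u ≤ M := by
    intro u hu
    rw [hM]
    apply Real.sqrt_le_sqrt
    calc ∑' i, mt i * ‖u i‖ ^ 2 ≤ ∑' i, mt i * (2 * R₀) ^ 2 := by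
          apply Summable.tsum_le_tsum _ (hsq_summ u hu) (hmtS.mul_right _)
          intro i
          exact mul_le_mul_of_nonneg_left (by nlinarith [norm_nonneg (u i), hu i]) (hmt0 i)
      _ = 3 * (2 * R₀) ^ 2 := by rw [tsum_mul_right, hmtsum]
  have hDxM : Dx ≤ M := hwle δx hδxR
  have hDvM : Dv ≤ M := hwle δv hδvR
  -- Sx and Svα bounds
  have hSx_summ : Summable (fun j => m j * ‖δx j‖) := by
    apply Summable.of_nonneg_of_le (fun j => mul_nonneg (hm0 j) (norm_nonneg _)) (fun j => ?_) (hmS.mul_right (2 * R₀))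
    exact mul_le_mul_of_nonneg_left (hδxR j) (hm0 j)
  have hSv_summ : Summable (fun j => m j * ‖δv j‖) := by
    apply Summable.of_nonneg_of_le (fun j => mul_nonneg (hm0 j) (norm_nonneg _)) (fun j => ?_) (hmS.mul_right (2 * R₀))
    exact mul_le_mul_of_nonneg_left (hδvR j) (hm0 j)
  have hSvα_summ : Summable (fun j => m j * ‖δv j‖ ^ α) := by
    apply Summable.of_nonneg_of_le
      (fun j => mul_nonneg (hm0 j) (Real.rpow_nonneg (norm_nonneg _) _)) (fun j => ?_)
      (hmS.mul_right ((2 * R₀) ^ α))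
    exact mul_le_mul_of_nonneg_left
      (Real.rpow_le_rpow (norm_nonneg _) (hδvR j) hα0.le) (hm0 j)
  set Sx := ∑' j, m j * ‖δx j‖ with hSxdef
  set Svα := ∑' j, m j * ‖δv j‖ ^ α with hSvαdef
  have hmsq_le : ∀ (u : ℕ → EuclideanSpace ℝ (Fin d)), (∀ i, ‖u i‖ ≤ 2 * R₀) →
      ∑' j, m j * ‖u j‖ ^ 2 ≤ ∑' j, mt j * ‖u j‖ ^ 2 := by
    intro u hu
    apply Summable.tsum_le_tsum _ _ (hsq_summ u hu)
    · intro j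
      exact mul_le_mul_of_nonneg_right (hmle j) (sq_nonneg _)
    · apply Summable.of_nonneg_of_le (fun j => mul_nonneg (hm0 j) (sq_nonneg _)) (fun j => ?_) (hsq_summ u hu)
      exact mul_le_mul_of_nonneg_right (hmle j) (sq_nonneg _)
  have hmsq_summ : ∀ (u : ℕ → EuclideanSpace ℝ (Fin d)), (∀ i, ‖u i‖ ≤ 2 * R₀) →
      Summable (fun j => m j * ‖u j‖ ^ 2) := by
    intro u hu
    apply Summable.of_nonneg_of_le (fun j => mul_nonneg (hm0 j) (sq_nonneg _)) (fun j => ?_) (hsq_summ u hu)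
    exact mul_le_mul_of_nonneg_right (hmle j) (sq_nonneg _)
  have hSxDx : Sx ≤ Dx := by
    calc Sx ≤ Real.sqrt (∑' j, m j * ‖δx j‖ ^ 2) :=
          tsum_cs m (fun j => ‖δx j‖) hm0 (fun j => norm_nonneg _) hmS (le_of_eq hm1)
            hSx_summ (hmsq_summ δx hδxR)
      _ ≤ Dx := by
          rw [hDx]
          unfold wnorm
          exact Real.sqrt_le_sqrt (hmsq_le δx hδxR)
  have hSvDv : ∑' j, m j * ‖δv j‖ ≤ Dv := by
    calc ∑' j, m j * ‖δv j‖ ≤ Real.sqrt (∑' j, m j * ‖δv j‖ ^ 2) :=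
          tsum_cs m (fun j => ‖δv j‖) hm0 (fun j => norm_nonneg _) hmS (le_of_eq hm1)
            hSv_summ (hmsq_summ δv hδvR)
      _ ≤ Dv := by
          rw [hDv]
          unfold wnorm
          exact Real.sqrt_le_sqrt (hmsq_le δv hδvR)
  have hSvα2 : Svα ≤ 2 * Dv ^ α := by
    calc Svα ≤ (1 + 1) * (∑' j, m j * ‖δv j‖) ^ α :=
          tsum_jensen m (fun j => ‖δv j‖) hα0 hα1.le hm0 (fun j => norm_nonneg _) hmS
            (le_of_eq hm1) hSv_summ hSvα_summ
      _ ≤ 2 * Dv ^ α := by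
          have := Real.rpow_le_rpow
            (tsum_nonneg (fun j => mul_nonneg (hm0 j) (norm_nonneg _))) hSvDv hα0.le
          norm_num
          linarith
  -- Gamma norm bound
  have hGamB : ∀ w : EuclideanSpace ℝ (Fin d), ‖w‖ ≤ 2 * R₀ →
      ‖Gam d α w‖ ≤ sd * (2 * R₀) ^ α := by
    intro w hw
    calc ‖Gam d α w‖ ≤ sd * ‖w‖ ^ α := gam_norm_le hα0 w
      _ ≤ sd * (2 * R₀) ^ α :=
          mul_le_mul_of_nonneg_left (Real.rpow_le_rpow (norm_nonneg _) hw hα0.le) hsd0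
  -- summability of the interaction series
  have hterm_summ : ∀ (y w : ℕ → EuclideanSpace ℝ (Fin d)),
      (∀ i, ‖y i‖ ≤ R₀) → (∀ i, ‖w i‖ ≤ R₀) → ∀ i,
      Summable (fun j => (m j * ψ ‖y j - y i‖) • Gam d α (w j - w i)) := by
    intro y w hy hw i
    apply Summable.of_norm
    apply Summable.of_nonneg_of_le (fun j => norm_nonneg _) (fun j => ?_)
      (hmS.mul_right (Cψ * (sd * (2 * R₀) ^ α)))
    rw [norm_smul]
    have h1 : ‖w j - w i‖ ≤ 2 * R₀ := by
      calc ‖w j - w i‖ ≤ ‖w j‖ + ‖w i‖ := norm_sub_le _ _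
        _ ≤ 2 * R₀ := by linarith [hw j, hw i]
    have h2 := hGamB _ h1
    have h3 : ‖(m j * ψ ‖y j - y i‖ : ℝ)‖ = m j * ψ ‖y j - y i‖ := by
      rw [Real.norm_eq_abs, abs_of_nonneg (mul_nonneg (hm0 j) (hψnn _ (norm_nonneg _)))]
    rw [h3]
    calc m j * ψ ‖y j - y i‖ * ‖Gam d α (w j - w i)‖
        ≤ m j * Cψ * (sd * (2 * R₀) ^ α) :=
          mul_le_mul (mul_le_mul_of_nonneg_left (hψle _ (norm_nonneg _)) (hm0 j)) h2
            (norm_nonneg _) (mul_nonneg (hm0 j) hCψ0)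
      _ = m j * (Cψ * (sd * (2 * R₀) ^ α)) := by ring
  -- pointwise estimate on the interaction difference
  have hA : ∀ i, ‖AIC d κ α m ψ x v i - AIC d κ α m ψ xb vb i‖ ≤
      κ * (C1 * (Sx + ‖δx i‖) + C2 * (Svα + ‖δv i‖ ^ α)) := by
    intro i
    set f := fun j => (m j * ψ ‖x j - x i‖) • Gam d α (v j - v i) with hf
    set g := fun j => (m j * ψ ‖xb j - xb i‖) • Gam d α (vb j - vb i) with hg
    have hfS : Summable f := hterm_summ x v hxR hvR i
    have hgS : Summable g := hterm_summ xb vb hxbR hvbR i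
    set bnd := fun j => C1 * (m j * ‖δx j‖) + C1 * ‖δx i‖ * m j
        + C2 * (m j * ‖δv j‖ ^ α) + C2 * ‖δv i‖ ^ α * m j with hbnd
    have hpt : ∀ j, ‖f j - g j‖ ≤ bnd j := by
      intro j
      have hx2R : |‖x j - x i‖ - ‖xb j - xb i‖| ≤ ‖δx j‖ + ‖δx i‖ := by
        calc |‖x j - x i‖ - ‖xb j - xb i‖| ≤ ‖(x j - x i) - (xb j - xb i)‖ :=
              abs_norm_sub_norm_le _ _
          _ = ‖δx j - δx i‖ := by
              congr 1
              simp only [hδx]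
              abel
          _ ≤ ‖δx j‖ + ‖δx i‖ := norm_sub_le _ _
      have hψdiff : |ψ ‖x j - x i‖ - ψ ‖xb j - xb i‖| ≤ (Lψ : ℝ) * (‖δx j‖ + ‖δx i‖) := by
        have hd := hLψ.dist_le_mul ‖x j - x i‖ (Set.mem_Ici.mpr (norm_nonneg _))
          ‖xb j - xb i‖ (Set.mem_Ici.mpr (norm_nonneg _))
        rw [Real.dist_eq, Real.dist_eq] at hd
        calc |ψ ‖x j - x i‖ - ψ ‖xb j - xb i‖| ≤ (Lψ : ℝ) * |‖x j - x i‖ - ‖xb j - xb i‖| := hd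
          _ ≤ (Lψ : ℝ) * (‖δx j‖ + ‖δx i‖) := mul_le_mul_of_nonneg_left hx2R Lψ.coe_nonneg
      have hv2R : ‖v j - v i‖ ≤ 2 * R₀ := by
        calc ‖v j - v i‖ ≤ ‖v j‖ + ‖v i‖ := norm_sub_le _ _
          _ ≤ 2 * R₀ := by linarith [hvR j, hvR i]
      have hvdiff : ‖Gam d α (v j - v i) - Gam d α (vb j - vb i)‖ ≤
          sd * 2 * (‖δv j‖ ^ α + ‖δv i‖ ^ α) := by
        have h1 := gam_holder hα0 hα1.le (v j - v i) (vb j - vb i)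
        have h2 : ‖(v j - v i) - (vb j - vb i)‖ ≤ ‖δv j‖ + ‖δv i‖ := by
          have he : (v j - v i) - (vb j - vb i) = δv j - δv i := by
            simp only [hδv]
            abel
          rw [he]
          exact norm_sub_le _ _
        have h3 : ‖(v j - v i) - (vb j - vb i)‖ ^ α ≤ ‖δv j‖ ^ α + ‖δv i‖ ^ α := by
          calc ‖(v j - v i) - (vb j - vb i)‖ ^ α ≤ (‖δv j‖ + ‖δv i‖) ^ α :=
                Real.rpow_le_rpow (norm_nonneg _) h2 hα0.le
            _ ≤ ‖δv j‖ ^ α + ‖δv i‖ ^ α :=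
                real_rpow_add_le _ _ (norm_nonneg _) (norm_nonneg _) hα0.le hα1.le
        calc ‖Gam d α (v j - v i) - Gam d α (vb j - vb i)‖
            ≤ sd * (2 * ‖(v j - v i) - (vb j - vb i)‖ ^ α) := h1
          _ = sd * 2 * ‖(v j - v i) - (vb j - vb i)‖ ^ α := by ring
          _ ≤ sd * 2 * (‖δv j‖ ^ α + ‖δv i‖ ^ α) :=
              mul_le_mul_of_nonneg_left h3 (by positivity)
      have hsplit : f j - g j =
          (m j * ψ ‖x j - x i‖ - m j * ψ ‖xb j - xb i‖) • Gam d α (v j - v i)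
          + (m j * ψ ‖xb j - xb i‖) • (Gam d α (v j - v i) - Gam d α (vb j - vb i)) := by
        simp only [hf, hg]
        rw [sub_smul, smul_sub]
        abel
      rw [hsplit]
      calc ‖(m j * ψ ‖x j - x i‖ - m j * ψ ‖xb j - xb i‖) • Gam d α (v j - v i)
          + (m j * ψ ‖xb j - xb i‖) • (Gam d α (v j - v i) - Gam d α (vb j - vb i))‖
          ≤ ‖(m j * ψ ‖x j - x i‖ - m j * ψ ‖xb j - xb i‖) • Gam d α (v j - v i)‖
            + ‖(m j * ψ ‖xb j - xb i‖) • (Gam d α (v j - v i) - Gam d α (vb j - vb i))‖ :=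
            norm_add_le _ _
        _ ≤ (m j * ((Lψ : ℝ) * (‖δx j‖ + ‖δx i‖))) * (sd * (2 * R₀) ^ α)
            + (m j * Cψ) * (sd * 2 * (‖δv j‖ ^ α + ‖δv i‖ ^ α)) := by
            apply add_le_add
            · rw [norm_smul, Real.norm_eq_abs]
              have habs : |m j * ψ ‖x j - x i‖ - m j * ψ ‖xb j - xb i‖|
                  = m j * |ψ ‖x j - x i‖ - ψ ‖xb j - xb i‖| := by
                rw [← mul_sub, abs_mul, abs_of_nonneg (hm0 j)]
              rw [habs]
              exact mul_le_mul (mul_le_mul_of_nonneg_left hψdiff (hm0 j)) (hGamB _ hv2R)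
                (norm_nonneg _)
                (mul_nonneg (hm0 j) (mul_nonneg Lψ.coe_nonneg (by positivity)))
            · rw [norm_smul, Real.norm_eq_abs,
                abs_of_nonneg (mul_nonneg (hm0 j) (hψnn _ (norm_nonneg _)))]
              exact mul_le_mul (mul_le_mul_of_nonneg_left (hψle _ (norm_nonneg _)) (hm0 j))
                hvdiff (norm_nonneg _) (mul_nonneg (hm0 j) hCψ0)
        _ = bnd j := by
            simp only [hbnd, hC1, hC2]
            ring
    have s1 : Summable (fun j => C1 * (m j * ‖δx j‖)) := hSx_summ.mul_left C1
    have s2 : Summable (fun j => C1 * ‖δx i‖ * m j) := hmS.mul_left _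
    have s3 : Summable (fun j => C2 * (m j * ‖δv j‖ ^ α)) := hSvα_summ.mul_left C2
    have s4 : Summable (fun j => C2 * ‖δv i‖ ^ α * m j) := hmS.mul_left _
    have hbndS : Summable bnd := (((s1.add s2).add s3).add s4)
    have hnormS : Summable (fun j => ‖f j - g j‖) :=
      Summable.of_nonneg_of_le (fun j => norm_nonneg _) hpt hbndS
    have hAeq : AIC d κ α m ψ x v i - AIC d κ α m ψ xb vb i = κ • ∑' j, (f j - g j) := by
      rw [Summable.tsum_sub hfS hgS, smul_sub]
      rfl
    rw [hAeq, norm_smul, Real.norm_eq_abs, abs_of_pos hκ]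
    apply mul_le_mul_of_nonneg_left _ hκ.le
    calc ‖∑' j, (f j - g j)‖ ≤ ∑' j, ‖f j - g j‖ := norm_tsum_le_tsum_norm hnormS
      _ ≤ ∑' j, bnd j := Summable.tsum_le_tsum hpt hnormS hbndS
      _ = C1 * Sx + C1 * ‖δx i‖ * 1 + C2 * Svα + C2 * ‖δv i‖ ^ α * 1 := by
          simp only [hbnd]
          rw [Summable.tsum_add ((s1.add s2).add s3) s4, Summable.tsum_add (s1.add s2) s3, Summable.tsum_add s1 s2,
            tsum_mul_left, tsum_mul_left, tsum_mul_left, tsum_mul_left, hm1]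
      _ = C1 * (Sx + ‖δx i‖) + C2 * (Svα + ‖δv i‖ ^ α) := by ring
  -- weighted l² estimate of the interaction difference
  have hSx0 : 0 ≤ Sx := tsum_nonneg (fun j => mul_nonneg (hm0 j) (norm_nonneg _))
  have hSvα0 : 0 ≤ Svα :=
    tsum_nonneg (fun j => mul_nonneg (hm0 j) (Real.rpow_nonneg (norm_nonneg _) _))
  have hJsummα : Summable (fun i => mt i * (‖δv i‖ ^ 2) ^ α) := by
    apply Summable.of_nonneg_of_le
      (fun i => mul_nonneg (hmt0 i) (Real.rpow_nonneg (sq_nonneg _) _)) (fun i => ?_)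
      (hmtS.mul_right (((2 * R₀) ^ 2) ^ α))
    exact mul_le_mul_of_nonneg_left
      (Real.rpow_le_rpow (sq_nonneg _)
        (by nlinarith [hδvR i, norm_nonneg (δv i)]) hα0.le) (hmt0 i)
  have hJ : ∑' i, mt i * (‖δv i‖ ^ 2) ^ α ≤ 4 * (Dv ^ 2) ^ α := by
    calc ∑' i, mt i * (‖δv i‖ ^ 2) ^ α
        ≤ (3 + 1) * (∑' i, mt i * ‖δv i‖ ^ 2) ^ α :=
          tsum_jensen mt (fun i => ‖δv i‖ ^ 2) hα0 hα1.le hmt0 (fun i => sq_nonneg _)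
            hmtS (le_of_eq hmtsum) hδvsq hJsummα
      _ = 4 * (Dv ^ 2) ^ α := by rw [← hDvsq]; norm_num
  set H := fun i => (4 * κ ^ 2 * C1 ^ 2 * Sx ^ 2) * mt i
      + (4 * κ ^ 2 * C1 ^ 2) * (mt i * ‖δx i‖ ^ 2)
      + (4 * κ ^ 2 * C2 ^ 2 * Svα ^ 2) * mt i
      + (4 * κ ^ 2 * C2 ^ 2) * (mt i * (‖δv i‖ ^ 2) ^ α) with hH
  have t1 : Summable (fun i => (4 * κ ^ 2 * C1 ^ 2 * Sx ^ 2) * mt i) := hmtS.mul_left _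
  have t2 : Summable (fun i => (4 * κ ^ 2 * C1 ^ 2) * (mt i * ‖δx i‖ ^ 2)) := hδxsq.mul_left _
  have t3 : Summable (fun i => (4 * κ ^ 2 * C2 ^ 2 * Svα ^ 2) * mt i) := hmtS.mul_left _
  have t4 : Summable (fun i => (4 * κ ^ 2 * C2 ^ 2) * (mt i * (‖δv i‖ ^ 2) ^ α)) :=
    hJsummα.mul_left _
  have hHS : Summable H := ((t1.add t2).add t3).add t4
  have hptH : ∀ i, mt i * ‖AIC d κ α m ψ x v i - AIC d κ α m ψ xb vb i‖ ^ 2 ≤ H i := by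
    intro i
    have hq : ‖AIC d κ α m ψ x v i - AIC d κ α m ψ xb vb i‖ ^ 2 ≤
        4 * κ ^ 2 * C1 ^ 2 * Sx ^ 2 + 4 * κ ^ 2 * C1 ^ 2 * ‖δx i‖ ^ 2
        + 4 * κ ^ 2 * C2 ^ 2 * Svα ^ 2 + 4 * κ ^ 2 * C2 ^ 2 * (‖δv i‖ ^ 2) ^ α := by
      have h2 : (‖δv i‖ ^ α) ^ 2 = (‖δv i‖ ^ 2) ^ α := (sq_rpow_comm _ (norm_nonneg _)).symm
      rw [← h2]
      have h1 : ‖AIC d κ α m ψ x v i - AIC d κ α m ψ xb vb i‖ ≤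
          κ * (C1 * Sx + C1 * ‖δx i‖ + C2 * Svα + C2 * ‖δv i‖ ^ α) := by
        calc ‖AIC d κ α m ψ x v i - AIC d κ α m ψ xb vb i‖
            ≤ κ * (C1 * (Sx + ‖δx i‖) + C2 * (Svα + ‖δv i‖ ^ α)) := hA i
          _ = κ * (C1 * Sx + C1 * ‖δx i‖ + C2 * Svα + C2 * ‖δv i‖ ^ α) := by ring
      have h4 := four_sq (C1 * Sx) (C1 * ‖δx i‖) (C2 * Svα) (C2 * ‖δv i‖ ^ α)
      calc ‖AIC d κ α m ψ x v i - AIC d κ α m ψ xb vb i‖ ^ 2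
          ≤ (κ * (C1 * Sx + C1 * ‖δx i‖ + C2 * Svα + C2 * ‖δv i‖ ^ α)) ^ 2 :=
            pow_le_pow_left₀ (norm_nonneg _) h1 2
        _ = κ ^ 2 * (C1 * Sx + C1 * ‖δx i‖ + C2 * Svα + C2 * ‖δv i‖ ^ α) ^ 2 := by ring
        _ ≤ κ ^ 2 * (4 * ((C1 * Sx) ^ 2 + (C1 * ‖δx i‖) ^ 2 + (C2 * Svα) ^ 2
            + (C2 * ‖δv i‖ ^ α) ^ 2)) := mul_le_mul_of_nonneg_left h4 (sq_nonneg κ)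
        _ = 4 * κ ^ 2 * C1 ^ 2 * Sx ^ 2 + 4 * κ ^ 2 * C1 ^ 2 * ‖δx i‖ ^ 2
            + 4 * κ ^ 2 * C2 ^ 2 * Svα ^ 2 + 4 * κ ^ 2 * C2 ^ 2 * (‖δv i‖ ^ α) ^ 2 := by
            ring
    calc mt i * ‖AIC d κ α m ψ x v i - AIC d κ α m ψ xb vb i‖ ^ 2
        ≤ mt i * (4 * κ ^ 2 * C1 ^ 2 * Sx ^ 2 + 4 * κ ^ 2 * C1 ^ 2 * ‖δx i‖ ^ 2
          + 4 * κ ^ 2 * C2 ^ 2 * Svα ^ 2 + 4 * κ ^ 2 * C2 ^ 2 * (‖δv i‖ ^ 2) ^ α) :=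
          mul_le_mul_of_nonneg_left hq (hmt0 i)
      _ = H i := by simp only [hH]; ring
  have hASsq : Summable (fun i => mt i * ‖AIC d κ α m ψ x v i - AIC d κ α m ψ xb vb i‖ ^ 2) :=
    Summable.of_nonneg_of_le (fun i => mul_nonneg (hmt0 i) (sq_nonneg _)) hptH hHS
  have hSig : ∑' i, mt i * ‖AIC d κ α m ψ x v i - AIC d κ α m ψ xb vb i‖ ^ 2 ≤
      (8 * κ * (C1 * Dx + C2 * Dv ^ α)) ^ 2 := by
    have hDvα0 : 0 ≤ Dv ^ α := Real.rpow_nonneg hDv0 _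
    calc ∑' i, mt i * ‖AIC d κ α m ψ x v i - AIC d κ α m ψ xb vb i‖ ^ 2
        ≤ ∑' i, H i := Summable.tsum_le_tsum hptH hASsq hHS
      _ = (4 * κ ^ 2 * C1 ^ 2 * Sx ^ 2) * 3 + (4 * κ ^ 2 * C1 ^ 2) * Dx ^ 2
          + (4 * κ ^ 2 * C2 ^ 2 * Svα ^ 2) * 3
          + (4 * κ ^ 2 * C2 ^ 2) * (∑' i, mt i * (‖δv i‖ ^ 2) ^ α) := by
          simp only [hH]
          rw [Summable.tsum_add ((t1.add t2).add t3) t4, Summable.tsum_add (t1.add t2) t3, Summable.tsum_add t1 t2,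
            tsum_mul_left, tsum_mul_left, tsum_mul_left, tsum_mul_left, hmtsum, hDxsq]
      _ ≤ (8 * κ * (C1 * Dx + C2 * Dv ^ α)) ^ 2 := by
          have h2 : (Dv ^ 2) ^ α = (Dv ^ α) ^ 2 := sq_rpow_comm _ hDv0
          have hJ' : ∑' i, mt i * (‖δv i‖ ^ 2) ^ α ≤ 4 * (Dv ^ α) ^ 2 := by
            rw [← h2]; exact hJ
          have hSx2 : Sx ^ 2 ≤ Dx ^ 2 := pow_le_pow_left₀ hSx0 hSxDx 2
          have hSv2 : Svα ^ 2 ≤ 4 * (Dv ^ α) ^ 2 := by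
            have h := pow_le_pow_left₀ hSvα0 hSvα2 2
            calc Svα ^ 2 ≤ (2 * Dv ^ α) ^ 2 := h
              _ = 4 * (Dv ^ α) ^ 2 := by ring
          have w1 : κ ^ 2 * C1 ^ 2 * Sx ^ 2 ≤ κ ^ 2 * C1 ^ 2 * Dx ^ 2 :=
            mul_le_mul_of_nonneg_left hSx2 (by positivity)
          have w2 : κ ^ 2 * C2 ^ 2 * Svα ^ 2 ≤ κ ^ 2 * C2 ^ 2 * (4 * (Dv ^ α) ^ 2) :=
            mul_le_mul_of_nonneg_left hSv2 (by positivity)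
          have w3 : κ ^ 2 * C2 ^ 2 * (∑' i, mt i * (‖δv i‖ ^ 2) ^ α)
              ≤ κ ^ 2 * C2 ^ 2 * (4 * (Dv ^ α) ^ 2) :=
            mul_le_mul_of_nonneg_left hJ' (by positivity)
          have hfin := small2 κ (C1 * Dx) (C2 * Dv ^ α) (mul_nonneg hC10 hDx0)
            (mul_nonneg hC20 hDvα0)
          calc (4 * κ ^ 2 * C1 ^ 2 * Sx ^ 2) * 3 + (4 * κ ^ 2 * C1 ^ 2) * Dx ^ 2
              + (4 * κ ^ 2 * C2 ^ 2 * Svα ^ 2) * 3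
              + (4 * κ ^ 2 * C2 ^ 2) * (∑' i, mt i * (‖δv i‖ ^ 2) ^ α)
              = 12 * (κ ^ 2 * C1 ^ 2 * Sx ^ 2) + 4 * (κ ^ 2 * C1 ^ 2 * Dx ^ 2)
                + 12 * (κ ^ 2 * C2 ^ 2 * Svα ^ 2)
                + 4 * (κ ^ 2 * C2 ^ 2 * (∑' i, mt i * (‖δv i‖ ^ 2) ^ α)) := by ring
            _ ≤ 12 * (κ ^ 2 * C1 ^ 2 * Dx ^ 2) + 4 * (κ ^ 2 * C1 ^ 2 * Dx ^ 2)
                + 12 * (κ ^ 2 * C2 ^ 2 * (4 * (Dv ^ α) ^ 2))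
                + 4 * (κ ^ 2 * C2 ^ 2 * (4 * (Dv ^ α) ^ 2)) := by linarith
            _ = 16 * κ ^ 2 * (C1 * Dx) ^ 2 + 64 * κ ^ 2 * (C2 * Dv ^ α) ^ 2 := by ring
            _ ≤ 64 * κ ^ 2 * (C1 * Dx + C2 * Dv ^ α) ^ 2 := hfin
            _ = (8 * κ * (C1 * Dx + C2 * Dv ^ α)) ^ 2 := by ring
  have hwA : wnorm d mt (fun i => AIC d κ α m ψ x v i - AIC d κ α m ψ xb vb i) ≤
      8 * κ * (C1 * Dx + C2 * Dv ^ α) := by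
    have h8 : 0 ≤ 8 * κ * (C1 * Dx + C2 * Dv ^ α) :=
      mul_nonneg (by linarith) (add_nonneg (mul_nonneg hC10 hDx0)
        (mul_nonneg hC20 (Real.rpow_nonneg hDv0 _)))
    unfold wnorm
    calc Real.sqrt (∑' i, mt i * ‖AIC d κ α m ψ x v i - AIC d κ α m ψ xb vb i‖ ^ 2)
        ≤ Real.sqrt ((8 * κ * (C1 * Dx + C2 * Dv ^ α)) ^ 2) := Real.sqrt_le_sqrt hSig
      _ = 8 * κ * (C1 * Dx + C2 * Dv ^ α) := Real.sqrt_sq h8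
  -- final assembly
  have hDα0 : 0 ≤ (Dx + Dv) ^ α := Real.rpow_nonneg (by linarith) _
  have hMα0 : 0 ≤ M ^ (1 - α) := Real.rpow_nonneg hMpos.le _
  have hDvD : Dv ^ α ≤ (Dx + Dv) ^ α := Real.rpow_le_rpow hDv0 (by linarith) hα0.le
  have hDxD : Dx ^ α ≤ (Dx + Dv) ^ α := Real.rpow_le_rpow hDx0 (by linarith) hα0.le
  have e1 : Dv ≤ M ^ (1 - α) * (Dx + Dv) ^ α :=
    le_trans (le_rpow_interp hα0 hα1.le Dv hDv0 hDvM)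
      (mul_le_mul_of_nonneg_left hDvD hMα0)
  have e2 : C1 * Dx ≤ C1 * (M ^ (1 - α) * (Dx + Dv) ^ α) :=
    mul_le_mul_of_nonneg_left
      (le_trans (le_rpow_interp hα0 hα1.le Dx hDx0 hDxM)
        (mul_le_mul_of_nonneg_left hDxD hMα0)) hC10
  have e3 : C2 * Dv ^ α ≤ C2 * (Dx + Dv) ^ α := mul_le_mul_of_nonneg_left hDvD hC20
  have e4 : 8 * κ * (C1 * Dx + C2 * Dv ^ α)
      ≤ 8 * κ * (C1 * (M ^ (1 - α) * (Dx + Dv) ^ α) + C2 * (Dx + Dv) ^ α) :=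
    mul_le_mul_of_nonneg_left (add_le_add e2 e3) (by linarith)
  have hwA' := le_trans hwA e4
  have hexp : (M ^ (1 - α) * (1 + 8 * κ * C1) + 8 * κ * C2 + 1) * (Dx + Dv) ^ α
      = M ^ (1 - α) * (Dx + Dv) ^ α
        + 8 * κ * (C1 * (M ^ (1 - α) * (Dx + Dv) ^ α) + C2 * (Dx + Dv) ^ α)
        + (Dx + Dv) ^ α := by ring
  rw [hexp]
  linarith
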